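/- A function f : ℤ → ℤ is congruence preserving on ⟨ℤ;+⟩ if and only if for every ⟨ℤ;+⟩-recognizable subset L ⊆ ℤ, the lattice 𝓛₊(L) is closed under f⁻¹ (i.e., f⁻¹(M) ∈ 𝓛₊(L) for every M ∈ 𝓛₊(L)). -/

import Mathlib

/-- `r` is an additive congruence on ℤ. -/
def IsAddCongZ (r : ℤ → ℤ → Prop) : Prop :=
  Equivalence r ∧ ∀ x y x' y', r x y → r x' y' → r (x + x') (y + y')

/-- `f` is congruence preserving on ⟨ℤ;+⟩. -/
def CongPresZ (f : ℤ → ℤ) : Prop :=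
  ∀ r : ℤ → ℤ → Prop, IsAddCongZ r → ∀ x y, r x y → r (f x) (f y)

/-- `L ⊆ ℤ` is ⟨ℤ;+⟩-recognizable. -/
def RecognizableZ (L : Set ℤ) : Prop :=
  ∃ (M : Type) (_ : AddMonoid M) (_ : Finite M) (φ : ℤ →+ M),
    Function.Surjective φ ∧ ∃ T : Set M, L = φ ⁻¹' T

/-- Membership in `𝓛₊(L)`: the smallest family of subsets of ℤ containing `L`, closed under
binary union, binary intersection and preimages of translations. -/
inductive LatPlusZ (L : Set ℤ) : Set ℤ → Prop
  | base : LatPlusZ L L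
  | union {X Y : Set ℤ} : LatPlusZ L X → LatPlusZ L Y → LatPlusZ L (X ∪ Y)
  | inter {X Y : Set ℤ} : LatPlusZ L X → LatPlusZ L Y → LatPlusZ L (X ∩ Y)
  | shift {X : Set ℤ} (a : ℤ) : LatPlusZ L X → LatPlusZ L {x | x + a ∈ X}

lemma memcs (a b : ℤ) : b ∈ AddSubgroup.closure {a} ↔ a ∣ b := by
  rw [AddSubgroup.mem_closure_singleton]
  constructor
  · rintro ⟨n, rfl⟩; exact ⟨n, by rw [smul_eq_mul, mul_comm]⟩
  · rintro ⟨n, rfl⟩; exact ⟨n, by rw [smul_eq_mul, mul_comm]⟩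

/-- The subgroup of periods of a subset of ℤ. -/
def periodSG (L : Set ℤ) : AddSubgroup ℤ where
  carrier := {p | ∀ x, x + p ∈ L ↔ x ∈ L}
  zero_mem' := by intro x; simp
  add_mem' := by
    intro p q hp hq x
    rw [← add_assoc, hq, hp]
  neg_mem' := by
    intro p hp x
    have := hp (x + -p)
    simpa using this.symm

lemma lat_preimage (f : ℤ → ℤ) (hf : CongPresZ f) (L : Set ℤ) (m : ℤ) (hm : m ≠ 0)
    (hmL : ∀ x, x + m ∈ L ↔ x ∈ L) :
    ∀ X, LatPlusZ L X → LatPlusZ L (f ⁻¹' X) := by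
  classical
  obtain ⟨g, hg⟩ := Int.subgroup_cyclic (periodSG L)
  have hP : ∀ p : ℤ, (∀ x, x + p ∈ L ↔ x ∈ L) ↔ g ∣ p := by
    intro p
    rw [show (∀ x, x + p ∈ L ↔ x ∈ L) ↔ p ∈ periodSG L from Iff.rfl, hg, memcs]
  have hg0 : g ≠ 0 := by
    intro h
    have := (hP m).mp hmL
    rw [h] at this
    exact hm (zero_dvd_iff.mp this)
  have per : ∀ x y : ℤ, g ∣ x - y → (x ∈ L ↔ y ∈ L) := by
    intro x y h
    have := (hP (x - y)).mpr h y
    rwa [show y + (x - y) = x by ring] at this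
  -- f preserves divisibility mod g
  have hfd : ∀ u v : ℤ, g ∣ u - v → g ∣ f u - f v := by
    intro u v h
    refine hf (fun a b => g ∣ a - b) ⟨⟨fun a => by simp, ?_, ?_⟩, ?_⟩ u v h
    · intro a b hab
      rw [show b - a = -(a - b) by ring]
      exact dvd_neg.mpr hab
    · intro a b c hab hbc
      have := dvd_add hab hbc
      rwa [show a - b + (b - c) = a - c by ring] at this
    · intro a b a' b' h1 h2
      have := dvd_add h1 h2
      rwa [show a - b + (a' - b') = (a + a') - (b + b') by ring] at this
  by_cases htriv : ∀ u v : ℤ, u ∈ L ↔ v ∈ L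
  · -- trivial case: every lattice element equals L
    have hall : ∀ X, LatPlusZ L X → X = L := by
      intro X hX
      induction hX with
      | base => rfl
      | union hA hB ihA ihB => rw [ihA, ihB, Set.union_self]
      | inter hA hB ihA ihB => rw [ihA, ihB, Set.inter_self]
      | shift a hA ih =>
          rw [ih]
          ext x
          exact htriv (x + a) x
    intro X hX
    rw [hall X hX, show f ⁻¹' L = L from Set.ext fun x => htriv (f x) x]
    exact LatPlusZ.base
  · -- nontrivial case
    have hndvd : ¬ g ∣ 1 := by
      intro h1
      exact htriv fun u v => per u v ((dvd_trans h1 (one_dvd _)))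
    set d : ℕ := g.natAbs with hdd
    have hdpos : 0 < d := Int.natAbs_pos.mpr hg0
    haveI : NeZero d := ⟨by omega⟩
    have hgd : g ∣ (d : ℤ) := Int.dvd_natAbs.mpr dvd_rfl
    have hdg : ∀ p : ℤ, (d:ℤ) ∣ p ↔ g ∣ p := fun p => Int.natAbs_dvd
    have hLne : ∃ y, y ∈ L := by
      push_neg at htriv
      obtain ⟨u, v, huv⟩ := htriv
      rcases huv with ⟨hu, _⟩ | ⟨_, hv⟩
      · exact ⟨u, hu⟩
      · exact ⟨v, hv⟩
    obtain ⟨y0, hy0⟩ := hLne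
    -- the coset lemma: a "modular fit" for any basepoint
    have hfit : ∀ c u : ℤ, u ∈ L → 0 ≤ (u - c) % (d:ℤ) ∧ (u - c) % (d:ℤ) ≤ (d:ℤ) - 1 ∧
        c + (u - c) % (d:ℤ) ∈ L := by
      intro c u hu
      have hd0 : (0:ℤ) < (d:ℤ) := by exact_mod_cast hdpos
      refine ⟨Int.emod_nonneg _ (by exact_mod_cast hd0.ne'), ?_, ?_⟩
      · have := Int.emod_lt_of_pos (u - c) hd0
        omega
      · have h1 : (d:ℤ) ∣ (u - c) - (u - c) % (d:ℤ) :=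
          ⟨(u - c) / d, by have := Int.emod_def (u - c) (d:ℤ); linarith⟩
        have h2 : g ∣ (c + (u - c) % (d:ℤ)) - u := by
          rw [show (c + (u - c) % (d:ℤ)) - u = -((u - c) - (u - c) % (d:ℤ)) by ring]
          exact dvd_neg.mpr (hgd.trans h1)
        exact (per _ _ h2).mpr hu
    -- each residue class is in the lattice
    have hclass : ∀ c : ℤ, LatPlusZ L {x : ℤ | g ∣ x - c} := by
      intro c
      set s : Finset ℤ := (Finset.Icc (0:ℤ) ((d:ℤ) - 1)).filter (fun a => c + a ∈ L) with hs
      have hsne : s.Nonempty := by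
        obtain ⟨h1, h2, h3⟩ := hfit c y0 hy0
        exact ⟨(y0 - c) % (d:ℤ), by simp [hs, Finset.mem_filter, Finset.mem_Icc, h1, h2, h3]⟩
      have hInter : ∀ t : Finset ℤ, t.Nonempty → LatPlusZ L (⋂ a ∈ t, {x : ℤ | x + a ∈ L}) := by
        intro t ht
        induction ht using Finset.Nonempty.cons_induction with
        | singleton a =>
            have he : (⋂ b ∈ ({a} : Finset ℤ), {x : ℤ | x + b ∈ L}) = {x : ℤ | x + a ∈ L} := by
              simp
            rw [he]
            exact LatPlusZ.shift a LatPlusZ.base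
        | cons a t ha ht ih =>
            rw [show ((⋂ b ∈ Finset.cons a t ha, {x : ℤ | x + b ∈ L}) =
              ({x : ℤ | x + a ∈ L} ∩ ⋂ b ∈ t, {x : ℤ | x + b ∈ L})) by
                rw [Finset.cons_eq_insert]; exact Finset.set_biInter_insert _ _ _]
            exact LatPlusZ.inter (LatPlusZ.shift a LatPlusZ.base) ih
      have hEq : (⋂ a ∈ s, {x : ℤ | x + a ∈ L}) = {x : ℤ | g ∣ x - c} := by
        apply Set.Subset.antisymm
        · intro x hx
          simp only [Set.mem_iInter] at hx
          set p := x - c with hp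
          have step1 : ∀ u, u ∈ L → u + p ∈ L := by
            intro u hu
            obtain ⟨h1, h2, h3⟩ := hfit c u hu
            set a := (u - c) % (d:ℤ) with hadef
            have ham : a ∈ s := by
              simp [hs, Finset.mem_filter, Finset.mem_Icc, h1, h2, h3]
            have hxa : x + a ∈ L := hx a ham
            have hdvd : g ∣ (x + a) - (u + p) := by
              have hd1 : (d:ℤ) ∣ (u - c) - a :=
                ⟨(u - c) / d, by have := Int.emod_def (u - c) (d:ℤ); linarith⟩
              have := hgd.trans hd1
              rw [show (x + a) - (u + p) = -((u - c) - a) by rw [hp]; ring]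
              exact dvd_neg.mpr this
            exact (per _ _ hdvd).mp hxa
          -- transfer to ZMod d to get that p is an honest period
          have castiff : ∀ u v : ℤ, ((u : ZMod d) = (v : ZMod d)) ↔ (d:ℤ) ∣ v - u := by
            intro u v
            rw [ZMod.intCast_eq_intCast_iff]
            exact Int.modEq_iff_dvd
          have memiff : ∀ u : ℤ, u ∈ L ↔ (u : ZMod d) ∈ ((fun z : ℤ => (z : ZMod d)) '' L) := by
            intro u
            constructor
            · exact fun h => ⟨u, h, rfl⟩
            · rintro ⟨v, hv, hvu⟩
              have : g ∣ u - v := (hdg _).mp ((castiff v u).mp hvu)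
              exact (per u v this).mpr hv
          set Sb : Set (ZMod d) := ((fun z : ℤ => (z : ZMod d)) '' L) with hSb
          have hinj : Function.Injective (fun t : ZMod d => t + (p : ZMod d)) :=
            fun a b hab => by simpa using hab
          have hmap : (fun t : ZMod d => t + (p : ZMod d)) '' Sb ⊆ Sb := by
            rintro _ ⟨_, ⟨u, hu, rfl⟩, rfl⟩
            have h1 : ((u + p : ℤ) : ZMod d) ∈ Sb := (memiff _).mp (step1 u hu)
            simpa using h1
          have heq2 : (fun t : ZMod d => t + (p : ZMod d)) '' Sb = Sb :=
            Set.eq_of_subset_of_ncard_le hmap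
              (by rw [Set.ncard_image_of_injective _ hinj]) (Set.toFinite _)
          have hperm : ∀ t : ZMod d, t + (p : ZMod d) ∈ Sb ↔ t ∈ Sb := by
            intro t
            constructor
            · intro h
              rw [← heq2] at h
              obtain ⟨t', ht', he⟩ := h
              have : t' = t := by
                have : t' + (p : ZMod d) = t + (p : ZMod d) := he
                exact add_right_cancel this
              rwa [← this]
            · intro h
              rw [← heq2]
              exact ⟨t, h, rfl⟩
          have hperiod : ∀ u : ℤ, u + p ∈ L ↔ u ∈ L := by
            intro u
            rw [memiff (u + p), memiff u]
            have : ((u + p : ℤ) : ZMod d) = (u : ZMod d) + (p : ZMod d) := by push_cast; ring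
            rw [this]
            exact hperm _
          exact (hP p).mp hperiod
        · intro x hx
          simp only [Set.mem_iInter]
          intro a ha
          have hca : c + a ∈ L := by
            rw [hs] at ha
            exact (Finset.mem_filter.mp ha).2
          have : g ∣ (x + a) - (c + a) := by
            rw [show (x + a) - (c + a) = x - c by ring]
            exact hx
          exact (per _ _ this).mpr hca
      rw [← hEq]
      exact hInter s hsne
    -- the lattice contains every g-periodic set
    have hempty : LatPlusZ L (∅ : Set ℤ) := by
      have h01 : {x : ℤ | g ∣ x - 0} ∩ {x : ℤ | g ∣ x - 1} = (∅ : Set ℤ) := by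
        ext x
        simp only [Set.mem_inter_iff, Set.mem_setOf_eq, Set.mem_empty_iff_false, iff_false,
          not_and]
        intro h0 h1
        apply hndvd
        have := dvd_sub h0 h1
        rwa [show (x - 0) - (x - 1) = 1 by ring] at this
      exact h01 ▸ LatPlusZ.inter (hclass 0) (hclass 1)
    have hU : ∀ u : Finset ℤ, LatPlusZ L (⋃ c ∈ u, {x : ℤ | g ∣ x - c}) := by
      intro u
      induction u using Finset.induction_on with
      | empty => simpa using hempty
      | insert _ _ hni ih =>
          rw [Finset.set_biUnion_insert]
          exact LatPlusZ.union (hclass _) ih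
    have hXlat : ∀ X : Set ℤ, (∀ u v : ℤ, g ∣ u - v → (u ∈ X ↔ v ∈ X)) → LatPlusZ L X := by
      intro X hX
      set t : Finset ℤ := (Finset.Icc (0:ℤ) ((d:ℤ) - 1)).filter (fun c => c ∈ X) with ht
      have hXe : X = ⋃ c ∈ t, {x : ℤ | g ∣ x - c} := by
        apply Set.Subset.antisymm
        · intro x hxX
          have hd0 : (0:ℤ) < (d:ℤ) := by exact_mod_cast hdpos
          have h1 : (0:ℤ) ≤ x % (d:ℤ) := Int.emod_nonneg _ (by exact_mod_cast hd0.ne')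
          have h2 : x % (d:ℤ) ≤ (d:ℤ) - 1 := by
            have := Int.emod_lt_of_pos x hd0
            omega
          have hdvd : g ∣ x - x % (d:ℤ) :=
            hgd.trans ⟨x / d, by have := Int.emod_def x (d:ℤ); linarith⟩
          have hcX : x % (d:ℤ) ∈ X := (hX x _ hdvd).mp hxX
          exact Set.mem_biUnion
            (Finset.mem_filter.mpr ⟨Finset.mem_Icc.mpr ⟨h1, h2⟩, hcX⟩) hdvd
        · intro x hx
          obtain ⟨c, hc, hxc⟩ := Set.mem_iUnion₂.mp hx
          have hcX : c ∈ X := (Finset.mem_filter.mp hc).2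
          exact (hX x c hxc).mpr hcX
      rw [hXe]
      exact hU t
    intro X hX
    have hXper : ∀ u v : ℤ, g ∣ u - v → (u ∈ X ↔ v ∈ X) := by
      induction hX with
      | base => exact per
      | union hA hB ihA ihB =>
          intro u v h
          simp only [Set.mem_union]
          exact or_congr (ihA u v h) (ihB u v h)
      | inter hA hB ihA ihB =>
          intro u v h
          simp only [Set.mem_inter_iff]
          exact and_congr (ihA u v h) (ihB u v h)
      | shift a hA ih =>
          intro u v h
          have : g ∣ (u + a) - (v + a) := by
            rwa [show (u + a) - (v + a) = u - v by ring]
          exact ih (u + a) (v + a) this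
    exact hXlat _ fun u v h => hXper (f u) (f v) (hfd u v h)

theorem stmt16 (f : ℤ → ℤ) :
    CongPresZ f ↔
      ∀ L : Set ℤ, RecognizableZ L →
        ∀ M : Set ℤ, LatPlusZ L M → LatPlusZ L (f ⁻¹' M) := by
  constructor
  · intro hf L hL X hX
    obtain ⟨M, _, _, φ, hsurj, T, rfl⟩ := hL
    obtain ⟨a, b, hab, hphi⟩ := Finite.exists_ne_map_eq_of_infinite φ
    have hm0 : φ (a - b) = 0 := by
      rw [sub_eq_add_neg, map_add, hphi, ← map_add]
      simp
    have hmL : ∀ x, x + (a - b) ∈ φ ⁻¹' T ↔ x ∈ φ ⁻¹' T := by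
      intro x
      simp [Set.mem_preimage, map_add, hm0]
    exact lat_preimage f hf _ (a - b) (sub_ne_zero.mpr hab) hmL X hX
  · intro h r hr x y hrxy
    obtain ⟨heq, hadd⟩ := hr
    have hneg : ∀ a : ℤ, r 0 a → r 0 (-a) := by
      intro a ha
      have h1 := hadd 0 a (-a) (-a) ha (heq.refl _)
      rw [show (0:ℤ) + -a = -a by ring, show a + -a = (0:ℤ) by ring] at h1
      exact heq.symm h1
    have hshift : ∀ u v : ℤ, r u v ↔ r 0 (v - u) := by
      intro u v
      constructor
      · intro huv
        have h1 := hadd u v (-u) (-u) huv (heq.refl _)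
        rwa [show u + -u = (0:ℤ) by ring, show v + -u = v - u by ring] at h1
      · intro h0
        have h1 := hadd 0 (v - u) u u h0 (heq.refl _)
        rwa [show (0:ℤ) + u = u by ring, show v - u + u = v by ring] at h1
    set S : AddSubgroup ℤ :=
      { carrier := {z | r 0 z}
        zero_mem' := heq.refl 0
        add_mem' := by
          intro p q hp hq
          have h1 := hadd 0 p 0 q hp hq
          rwa [show (0:ℤ) + 0 = (0:ℤ) by ring] at h1
        neg_mem' := fun {p} hp => hneg p hp } with hS
    obtain ⟨g, hg⟩ := Int.subgroup_cyclic S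
    have hmem : ∀ z : ℤ, r 0 z ↔ g ∣ z := by
      intro z
      rw [show r 0 z ↔ z ∈ S from Iff.rfl, hg, memcs]
    by_cases hg0 : g = 0
    · have h1 : g ∣ y - x := (hmem _).mp ((hshift x y).mp hrxy)
      rw [hg0] at h1
      have : y = x := by
        have := zero_dvd_iff.mp h1
        omega
      rw [this]
      exact heq.refl _
    · set n := g.natAbs with hn
      haveI : NeZero n := ⟨Int.natAbs_ne_zero.mpr hg0⟩
      set L : Set ℤ := {z | (n:ℤ) ∣ z} with hL
      have hrec : RecognizableZ L := by
        refine ⟨ZMod n, inferInstance, inferInstance, Int.castAddHom (ZMod n),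
          ZMod.intCast_surjective, {0}, ?_⟩
        ext z
        simp [hL, Set.mem_preimage, Int.coe_castAddHom,
          ZMod.intCast_zmod_eq_zero_iff_dvd]
      have hperX : ∀ X, LatPlusZ L X → ∀ u v : ℤ, (n:ℤ) ∣ u - v → (u ∈ X ↔ v ∈ X) := by
        intro X hX
        induction hX with
        | base =>
            intro u v hdvd
            constructor
            · intro hu
              have := dvd_sub hu hdvd
              rwa [show u - (u - v) = v by ring] at this
            · intro hv
              have := dvd_add hv hdvd
              rwa [show v + (u - v) = u by ring] at this
        | union hA hB ihA ihB =>
            intro u v hdvd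
            simp only [Set.mem_union]
            exact or_congr (ihA u v hdvd) (ihB u v hdvd)
        | inter hA hB ihA ihB =>
            intro u v hdvd
            simp only [Set.mem_inter_iff]
            exact and_congr (ihA u v hdvd) (ihB u v hdvd)
        | shift a hA ih =>
            intro u v hdvd
            have : (n:ℤ) ∣ (u + a) - (v + a) := by
              rwa [show (u + a) - (v + a) = u - v by ring]
            exact ih (u + a) (v + a) this
      have hlat := h L hrec {z | z + (-(f x)) ∈ L} (LatPlusZ.shift _ LatPlusZ.base)
      have hmemx : x ∈ f ⁻¹' {z | z + (-(f x)) ∈ L} := by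
        simp [hL]
      have hnd : (n:ℤ) ∣ x - y := by
        rw [hn]
        exact Int.natAbs_dvd.mpr ((hmem _).mp ((hshift y x).mp (heq.symm hrxy)))
      have hmemy : y ∈ f ⁻¹' {z | z + (-(f x)) ∈ L} :=
        (hperX _ hlat x y hnd).mp hmemx
      have hfin : g ∣ f y - f x := by
        rw [← Int.natAbs_dvd, ← hn]
        have : (n:ℤ) ∣ f y + -(f x) := hmemy
        rwa [show f y + -(f x) = f y - f x by ring] at this
      have hfin2 : g ∣ f x - f y := by
        rw [show f x - f y = -(f y - f x) by ring]
        exact dvd_neg.mpr hfin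
      exact heq.symm ((hshift (f y) (f x)).mpr ((hmem _).mpr hfin2))
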